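/- arXiv:2204.04242 — 3 statements merged into one kernel-verified Lean document; each statement's English description precedes it below -/
import Mathlib

section
/- Let A and B be finite sets (the covers of two patterns), let θ be a natural number with θ ≤ |A| (i.e., the pattern with cover A is frequent), and assume A ∪ B is nonempty. Then the lower bound LB = max(0, θ − |A \ B|) / (|B| + |A \ B|) satisfies LB ≤ |A ∩ B| / |A ∪ B|, i.e., LB is a lower bound on the Jaccard index of A and B (all quotients taken as real-number division of the cardinalities). -/
/-- The lower-bound relaxation `LB = max(0, θ − |A \ B|) / (|B| + |A \ B|)` is a lower
bound on the Jaccard index `|A ∩ B| / |A ∪ B|`, for finite sets `A`, `B` with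
`θ ≤ |A|` and `A ∪ B` nonempty. -/
theorem lb_le_jaccard (A B : Finset ℕ) (θ : ℕ) (hθ : θ ≤ A.card)
    (hAB : (A ∪ B).Nonempty) :
    max 0 ((θ : ℝ) - (A \ B).card) / ((B.card : ℝ) + (A \ B).card) ≤
      ((A ∩ B).card : ℝ) / ((A ∪ B).card : ℝ) := by
  have hu : (A ∪ B).card = B.card + (A \ B).card := by
    rw [← Finset.card_sdiff_add_card, Nat.add_comm]
  have hA : A.card = (A ∩ B).card + (A \ B).card :=
    (Finset.card_inter_add_card_sdiff A B).symm
  have hpos : (0 : ℝ) < (B.card : ℝ) + (A \ B).card := by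
    have := Finset.card_pos.mpr hAB
    rw [hu] at this
    exact_mod_cast this
  rw [hu]
  push_cast
  gcongr
  apply max_le (by positivity)
  have : (θ:ℝ) ≤ (A ∩ B).card + (A \ B).card := by exact_mod_cast hA ▸ hθ
  linarith
end

section
/- Let H be a nonempty finite set, let θ be a natural number, and let d and d' be natural numbers with d' ≤ d. Then max(0, θ − d) / (|H| + d) ≤ max(0, θ − d') / (|H| + d') (real-number division). Consequently, for finite sets C_p, C_q, H with H nonempty and C_q ⊆ C_p (the cover of a superset pattern is contained in the cover of a subset pattern), the lower bound is anti-monotone: max(0, θ − |C_p \ H|) / (|H| + |C_p \ H|) ≤ max(0, θ − |C_q \ H|) / (|H| + |C_q \ H|). -/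
/-- Anti-monotonicity of the lower bound `max(0, θ − d) / (|H| + d)`:
it is anti-monotone in `d`, and consequently anti-monotone under shrinking of covers
`C_q ⊆ C_p`. -/
theorem lb_antimonotone :
    (∀ (H : Finset ℕ) (θ d d' : ℕ), H.Nonempty → d' ≤ d →
      max 0 ((θ : ℝ) - d) / ((H.card : ℝ) + d) ≤
        max 0 ((θ : ℝ) - d') / ((H.card : ℝ) + d')) ∧
    (∀ (Cp Cq H : Finset ℕ) (θ : ℕ), H.Nonempty → Cq ⊆ Cp →
      max 0 ((θ : ℝ) - (Cp \ H).card) / ((H.card : ℝ) + (Cp \ H).card) ≤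
        max 0 ((θ : ℝ) - (Cq \ H).card) / ((H.card : ℝ) + (Cq \ H).card)) := by
  have main : ∀ (H : Finset ℕ) (θ d d' : ℕ), H.Nonempty → d' ≤ d →
      max 0 ((θ : ℝ) - d) / ((H.card : ℝ) + d) ≤
        max 0 ((θ : ℝ) - d') / ((H.card : ℝ) + d') := by
    intro H θ d d' hH hdd
    have hcard : (0 : ℝ) < H.card := by
      exact_mod_cast Finset.card_pos.mpr hH
    have hd' : (d' : ℝ) ≤ d := by exact_mod_cast hdd
    apply div_le_div₀ (le_max_left _ _)
    · exact max_le_max le_rfl (by linarith)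
    · positivity
    · linarith
  refine ⟨main, fun Cp Cq H θ hH hsub => ?_⟩
  exact main H θ _ _ hH (Finset.card_le_card (Finset.sdiff_subset_sdiff hsub le_rfl))
end

section
/- Let C_p, C_q, H be finite sets with C_q ⊆ C_p, H nonempty, and let θ be a natural number with θ ≤ |C_q|. Let J_max be a real number. If max(0, θ − |C_p \ H|) / (|H| + |C_p \ H|) > J_max, then |C_q ∩ H| / |C_q ∪ H| > J_max (real-number division of cardinalities). That is, once the lower bound computed from the cover C_p of a pattern p exceeds the diversity threshold J_max, every frequent pattern q whose cover C_q is contained in C_p has Jaccard index with the history cover H exceeding J_max, so it violates the diversity constraint and the whole branch can be pruned. -/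
/-- Pruning soundness: if the lower bound computed from the cover `C_p` exceeds the
diversity threshold `J_max`, then every frequent pattern whose cover `C_q` is contained
in `C_p` has Jaccard index with the history cover `H` exceeding `J_max`. -/
theorem lb_pruning_sound (Cp Cq H : Finset ℕ) (θ : ℕ) (Jmax : ℝ)
    (hsub : Cq ⊆ Cp) (hH : H.Nonempty) (hθ : θ ≤ Cq.card)
    (hLB : max 0 ((θ : ℝ) - (Cp \ H).card) / ((H.card : ℝ) + (Cp \ H).card) > Jmax) :
    ((Cq ∩ H).card : ℝ) / ((Cq ∪ H).card : ℝ) > Jmax := by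
  have hHpos : (0 : ℝ) < H.card := by
    exact_mod_cast Finset.card_pos.mpr hH
  -- union cardinality bound
  have hUsub : Cq ∪ H ⊆ (Cp \ H) ∪ H := by
    intro x hx
    rcases Finset.mem_union.mp hx with hx | hx
    · by_cases hxH : x ∈ H
      · exact Finset.mem_union_right _ hxH
      · exact Finset.mem_union_left _ (Finset.mem_sdiff.mpr ⟨hsub hx, hxH⟩)
    · exact Finset.mem_union_right _ hx
  have hUcard : ((Cq ∪ H).card : ℝ) ≤ (H.card : ℝ) + (Cp \ H).card := by
    have h1 : (Cq ∪ H).card ≤ ((Cp \ H) ∪ H).card := Finset.card_le_card hUsub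
    have h2 : ((Cp \ H) ∪ H).card ≤ (Cp \ H).card + H.card := Finset.card_union_le _ _
    have h3 := le_trans h1 h2
    have h4 : ((Cq ∪ H).card : ℝ) ≤ ((Cp \ H).card : ℝ) + H.card := by exact_mod_cast h3
    linarith
  have hUpos : (0 : ℝ) < (Cq ∪ H).card := by
    have : H.card ≤ (Cq ∪ H).card := Finset.card_le_card Finset.subset_union_right
    exact lt_of_lt_of_le hHpos (by exact_mod_cast this)
  -- numerator bound
  have hsd : Cq \ H ⊆ Cp \ H := Finset.sdiff_subset_sdiff hsub le_rfl
  have hsplit : (Cq ∩ H).card + (Cq \ H).card = Cq.card :=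
    Finset.card_inter_add_card_sdiff Cq H
  have hnum : max 0 ((θ : ℝ) - (Cp \ H).card) ≤ ((Cq ∩ H).card : ℝ) := by
    apply max_le
    · positivity
    · have h1 : (Cq \ H).card ≤ (Cp \ H).card := Finset.card_le_card hsd
      have h2 : (θ : ℝ) ≤ Cq.card := by exact_mod_cast hθ
      have h3 : ((Cq ∩ H).card : ℝ) + (Cq \ H).card = Cq.card := by exact_mod_cast hsplit
      have h4 : ((Cq \ H).card : ℝ) ≤ (Cp \ H).card := by exact_mod_cast h1
      linarith
  calc Jmax < max 0 ((θ : ℝ) - (Cp \ H).card) / ((H.card : ℝ) + (Cp \ H).card) := hLB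
    _ ≤ ((Cq ∩ H).card : ℝ) / ((Cq ∪ H).card : ℝ) :=
        div_le_div₀ (by positivity) hnum hUpos hUcard
end
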